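/- arXiv:1201.2212 — 2 statements merged into one kernel-verified Lean document; each statement's English description precedes it below -/
import Mathlib

section
/- Let Π be a naturally labeled poset on {1,…,d}, i.e., a partial order ⪯ on {1,…,d} such that j ⪯ k implies j ≤ k. Then, as an identity of formal power series in z with integer coefficients, (Σ_{t≥0} p_Π(t) z^t) · Π_{i=1}^d (1 − z^i) = Σ_σ z^{maj σ}, where the sum on the right is over all permutations σ of {1,…,d} whose associated chain is a linear extension of Π, i.e., such that j ⪯ k implies σ^{−1}(j) ≤ σ^{−1}(k). -/
open scoped Classical

def majIdx {d : ℕ} (σ : Equiv.Perm (Fin d)) : ℕ :=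
  ∑ i : Fin d, if h : (i : ℕ) + 1 < d then
    (if σ ⟨(i : ℕ) + 1, h⟩ < σ i then (i : ℕ) + 1 else 0) else 0

/-- Indicator of a descent at 0-based position `i` (between `i` and `i+1`). -/
def descAt {d : ℕ} (σ : Equiv.Perm (Fin d)) (i : Fin d) : ℕ :=
  if h : (i : ℕ) + 1 < d then (if σ ⟨(i : ℕ) + 1, h⟩ < σ i then 1 else 0) else 0

/-- Number of descents at positions `≥ i`. -/
def cfun {d : ℕ} (σ : Equiv.Perm (Fin d)) (i : Fin d) : ℕ :=
  ∑ j : Fin d, if i ≤ j then descAt σ j else 0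

/-- `x` is compatible with `σ`: weakly decreasing along `σ`, strictly at descents. -/
def Compat {d : ℕ} (σ : Equiv.Perm (Fin d)) (x : Fin d → ℕ) : Prop :=
  ∀ i : Fin d, ∀ h : (i : ℕ) + 1 < d, x (σ ⟨(i : ℕ) + 1, h⟩) + descAt σ i ≤ x (σ i)

/-- Weakly decreasing. -/
def Dec {d : ℕ} (y : Fin d → ℕ) : Prop :=
  ∀ i : Fin d, ∀ h : (i : ℕ) + 1 < d, y ⟨(i : ℕ) + 1, h⟩ ≤ y i

lemma majIdx_eq_sum_cfun {d : ℕ} (σ : Equiv.Perm (Fin d)) :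
    majIdx σ = ∑ i : Fin d, cfun σ i := by
  unfold majIdx cfun
  rw [Finset.sum_comm]
  refine Finset.sum_congr rfl fun j _ => ?_
  have h1 : ∑ x : Fin d, (if x ≤ j then descAt σ j else 0)
      = (Finset.univ.filter (fun x : Fin d => x ≤ j)).card * descAt σ j := by
    rw [Finset.sum_ite, Finset.sum_const_zero, Finset.sum_const, add_zero, smul_eq_mul]
  have h2 : (Finset.univ.filter (fun x : Fin d => x ≤ j)).card = (j : ℕ) + 1 := by
    have : Finset.univ.filter (fun x : Fin d => x ≤ j) = Finset.Iic j := by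
      ext x; simp
    rw [this, Fin.card_Iic]
  rw [h1, h2]
  unfold descAt
  by_cases h : (j : ℕ) + 1 < d
  · simp only [dif_pos h]
    split_ifs <;> ring
  · simp only [dif_neg h, mul_zero]

lemma finite_aux {d t : ℕ} (P : (Fin d → ℕ) → Prop) :
    Finite {y : Fin d → ℕ // P y ∧ ∑ i, y i = t} := by
  apply Finite.of_injective (β := Fin d → Fin (t + 1))
    (fun y => fun i => ⟨y.1 i, by
      have h1 : y.1 i ≤ ∑ j, y.1 j :=
        Finset.single_le_sum (f := y.1) (fun j _ => Nat.zero_le _) (Finset.mem_univ i)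
      have := y.2.2
      omega⟩)
  intro a b hab
  ext i
  have := congrFun hab i
  simpa [Fin.mk.injEq] using this

lemma cfun_succ {d : ℕ} (σ : Equiv.Perm (Fin d)) (i : Fin d) (h : (i : ℕ) + 1 < d) :
    cfun σ i = descAt σ i + cfun σ ⟨(i : ℕ) + 1, h⟩ := by
  unfold cfun
  have key : ∀ j : Fin d, (if i ≤ j then descAt σ j else 0)
      = (if j = i then descAt σ j else 0)
        + (if (⟨(i : ℕ) + 1, h⟩ : Fin d) ≤ j then descAt σ j else 0) := by
    intro j
    rcases lt_trichotomy (j : ℕ) (i : ℕ) with hj | hj | hj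
    · rw [if_neg, if_neg, if_neg]
      · simp only [Fin.le_def, Fin.val_mk]; omega
      · intro hh; rw [Fin.ext_iff] at hh; omega
      · simp only [Fin.le_def]; omega
    · rw [if_pos, if_pos, if_neg, add_zero]
      · simp only [Fin.le_def, Fin.val_mk]; omega
      · exact Fin.ext hj
      · simp only [Fin.le_def]; omega
    · rw [if_pos, if_neg, if_pos, zero_add]
      · simp only [Fin.le_def, Fin.val_mk]; omega
      · intro hh; rw [Fin.ext_iff] at hh; omega
      · simp only [Fin.le_def]; omega
  calc ∑ j : Fin d, (if i ≤ j then descAt σ j else 0)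
      = ∑ j : Fin d, ((if j = i then descAt σ j else 0)
        + (if (⟨(i : ℕ) + 1, h⟩ : Fin d) ≤ j then descAt σ j else 0)) :=
        Finset.sum_congr rfl fun j _ => key j
    _ = descAt σ i + ∑ j : Fin d, (if (⟨(i : ℕ) + 1, h⟩ : Fin d) ≤ j then descAt σ j else 0) := by
        rw [Finset.sum_add_distrib, Finset.sum_ite_eq' Finset.univ i (fun j => descAt σ j)]
        simp

lemma cfun_last {d : ℕ} (σ : Equiv.Perm (Fin d)) (i : Fin d) (h : (i : ℕ) + 1 = d) :
    cfun σ i = 0 := by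
  unfold cfun
  refine Finset.sum_eq_zero fun j _ => ?_
  split_ifs with hij
  · unfold descAt
    rw [dif_neg]
    have : (i : ℕ) ≤ (j : ℕ) := hij
    omega
  · rfl

/-- Chain lemma: consecutive weak decrease implies global weak decrease. -/
lemma dec_chain {d : ℕ} {y : Fin d → ℕ}
    (h : ∀ i : Fin d, ∀ hi : (i : ℕ) + 1 < d, y ⟨(i : ℕ) + 1, hi⟩ ≤ y i) :
    ∀ i j : Fin d, i ≤ j → y j ≤ y i := by
  have key : ∀ n : ℕ, ∀ hn : n < d, ∀ i : Fin d, (i : ℕ) ≤ n → y ⟨n, hn⟩ ≤ y i := by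
    intro n
    induction n with
    | zero =>
        intro hn i hi
        have : i = ⟨0, hn⟩ := Fin.ext (by simp only [Fin.val_mk]; omega)
        rw [this]
    | succ m ih =>
      intro hn i hi
      rcases Nat.lt_or_ge (i : ℕ) (m + 1) with hlt | hge
      · have hm : m < d := by omega
        have step : y ⟨m + 1, hn⟩ ≤ y ⟨m, hm⟩ := h ⟨m, hm⟩ hn
        exact step.trans (ih hm i (by omega))
      · have : i = ⟨m + 1, hn⟩ := Fin.ext (by simp only [Fin.val_mk]; omega)
        rw [this]
  intro i j hij
  have := key (j : ℕ) j.isLt i hij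
  simpa using this

lemma compat_dec {d : ℕ} {σ : Equiv.Perm (Fin d)} {x : Fin d → ℕ} (hc : Compat σ x) :
    ∀ i : Fin d, ∀ hi : (i : ℕ) + 1 < d, x (σ ⟨(i : ℕ) + 1, hi⟩) ≤ x (σ i) := by
  intro i hi
  have := hc i hi
  omega

lemma compat_chain {d : ℕ} {σ : Equiv.Perm (Fin d)} {x : Fin d → ℕ} (hc : Compat σ x) :
    ∀ i j : Fin d, i ≤ j → x (σ j) ≤ x (σ i) :=
  dec_chain (y := fun i => x (σ i)) (compat_dec hc)

lemma cfun_le {d : ℕ} {σ : Equiv.Perm (Fin d)} {x : Fin d → ℕ} (hc : Compat σ x) :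
    ∀ i : Fin d, cfun σ i ≤ x (σ i) := by
  have key : ∀ m : ℕ, ∀ i : Fin d, d - 1 - (i : ℕ) ≤ m → cfun σ i ≤ x (σ i) := by
    intro m
    induction m with
    | zero =>
      intro i hi
      have : (i : ℕ) + 1 = d := by have := i.isLt; omega
      rw [cfun_last σ i this]
      exact Nat.zero_le _
    | succ m ih =>
      intro i hi
      by_cases hl : (i : ℕ) + 1 < d
      · have h1 := cfun_succ σ i hl
        have h2 := ih ⟨(i : ℕ) + 1, hl⟩ (by simp only [Fin.val_mk]; omega)
        have h3 := hc i hl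
        omega
      · have : (i : ℕ) + 1 = d := by have := i.isLt; omega
        rw [cfun_last σ i this]
        exact Nat.zero_le _
  intro i
  exact key (d - 1 - (i : ℕ)) i le_rfl

lemma compat_tie {d : ℕ} {σ : Equiv.Perm (Fin d)} {x : Fin d → ℕ} (hc : Compat σ x) :
    ∀ i j : Fin d, i < j → x (σ i) = x (σ j) → σ i < σ j := by
  have key : ∀ n : ℕ, ∀ hn : n < d, ∀ i : Fin d, (i : ℕ) < n →
      x (σ i) = x (σ ⟨n, hn⟩) → σ i < σ ⟨n, hn⟩ := by
    intro n
    induction n with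
    | zero => intro hn i hi; omega
    | succ m ih =>
      intro hn i hi heq
      have hm : m < d := by omega
      have hchain : x (σ ⟨m, hm⟩) ≤ x (σ i) :=
        compat_chain hc i ⟨m, hm⟩ (by simp only [Fin.le_def, Fin.val_mk]; omega)
      have hcomp : x (σ ⟨m + 1, hn⟩) + descAt σ ⟨m, hm⟩ ≤ x (σ ⟨m, hm⟩) := hc ⟨m, hm⟩ hn
      have hdec : x (σ ⟨m + 1, hn⟩) ≤ x (σ ⟨m, hm⟩) := by omega
      have heqm : x (σ ⟨m, hm⟩) = x (σ ⟨m + 1, hn⟩) := by omega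
      have hdesc0 : descAt σ ⟨m, hm⟩ = 0 := by omega
      have hnd : ¬ (σ ⟨m + 1, hn⟩ < σ ⟨m, hm⟩) := by
        intro hcon
        unfold descAt at hdesc0
        rw [dif_pos hn, if_pos hcon] at hdesc0
        omega
      have hne : σ ⟨m, hm⟩ ≠ σ ⟨m + 1, hn⟩ := by
        intro hcon
        have := σ.injective hcon
        rw [Fin.ext_iff] at this
        simp only [Fin.val_mk] at this
        omega
      have hstep : σ ⟨m, hm⟩ < σ ⟨m + 1, hn⟩ := lt_of_le_of_ne (not_lt.mp hnd) hne
      rcases Nat.lt_or_ge (i : ℕ) m with hlt | hge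
      · exact (ih hm i hlt (by omega)).trans hstep
      · have : i = ⟨m, hm⟩ := Fin.ext (by simp only [Fin.val_mk]; omega)
        rw [this]; exact hstep
  intro i j hij heq
  have := key (j : ℕ) j.isLt i hij (by simpa using heq)
  simpa using this

/-- A permutation is compatible with `x` iff it sorts `x` decreasingly (ties by index). -/
lemma compat_iff_sort {d : ℕ} (σ : Equiv.Perm (Fin d)) (x : Fin d → ℕ) :
    Compat σ x ↔ σ = Tuple.sort (fun j => -(x j : ℤ)) := by
  rw [Tuple.eq_sort_iff]
  constructor
  · intro hc
    constructor
    · intro i j hij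
      simp only [Function.comp_apply, neg_le_neg_iff, Nat.cast_le]
      exact compat_chain hc i j hij
    · intro i j hij heq
      apply compat_tie hc i j hij
      simp only [Function.comp_apply, neg_inj, Nat.cast_inj] at heq
      exact heq
  · rintro ⟨hmono, htie⟩ i h
    have hle : x (σ ⟨(i : ℕ) + 1, h⟩) ≤ x (σ i) := by
      have := hmono (a := i) (b := ⟨(i : ℕ) + 1, h⟩)
        (by simp only [Fin.le_def, Fin.val_mk]; omega)
      simpa using this
    unfold descAt
    rw [dif_pos h]
    split_ifs with hlt
    · rcases lt_or_eq_of_le hle with hs | hs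
      · omega
      · exfalso
        have := htie i ⟨(i : ℕ) + 1, h⟩ (by simp only [Fin.lt_def, Fin.val_mk]; omega)
          (by simp [hs])
        exact absurd this (not_lt.mpr hlt.le)
    · omega

lemma linext_compat_ppart {d : ℕ} {r : Fin d → Fin d → Prop} {σ : Equiv.Perm (Fin d)}
    {x : Fin d → ℕ} (hc : Compat σ x) (hle : ∀ j k, r j k → σ.symm j ≤ σ.symm k) :
    ∀ j k, r j k → x k ≤ x j := by
  intro j k hjk
  have := compat_chain hc (σ.symm j) (σ.symm k) (hle j k hjk)
  simpa using this

lemma ppart_linext {d : ℕ} {r : Fin d → Fin d → Prop} {σ : Equiv.Perm (Fin d)}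
    {x : Fin d → ℕ} (hnat : ∀ j k, r j k → j ≤ k)
    (hc : Compat σ x) (hp : ∀ j k, r j k → x k ≤ x j) :
    ∀ j k, r j k → σ.symm j ≤ σ.symm k := by
  intro j k hjk
  by_contra hcon
  push_neg at hcon
  have h1 : x (σ (σ.symm j)) ≤ x (σ (σ.symm k)) := compat_chain hc _ _ hcon.le
  simp only [Equiv.apply_symm_apply] at h1
  have h2 : x k ≤ x j := hp j k hjk
  have heq : x (σ (σ.symm k)) = x (σ (σ.symm j)) := by
    simp only [Equiv.apply_symm_apply]; omega
  have h3 := compat_tie hc _ _ hcon heq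
  simp only [Equiv.apply_symm_apply] at h3
  have h4 : j ≤ k := hnat j k hjk
  exact absurd h3 (not_lt.mpr h4)

lemma card_split_pred {α : Type*} (P Q : α → Prop) [hf : Finite {a : α // P a}] :
    Nat.card {a : α // P a} =
      Nat.card {a : α // P a ∧ Q a} + Nat.card {a : α // P a ∧ ¬ Q a} := by
  have e1 := Equiv.subtypeSubtypeEquivSubtypeInter P Q
  have e2 := Equiv.subtypeSubtypeEquivSubtypeInter P (fun a => ¬ Q a)
  calc Nat.card {a : α // P a}
      = Nat.card ({b : {a : α // P a} // Q b.1} ⊕ {b : {a : α // P a} // ¬ Q b.1}) :=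
        (Nat.card_congr (Equiv.sumCompl (fun b : {a : α // P a} => Q b.1))).symm
    _ = Nat.card {b : {a : α // P a} // Q b.1} + Nat.card {b : {a : α // P a} // ¬ Q b.1} :=
        Nat.card_sum
    _ = Nat.card {a : α // P a ∧ Q a} + Nat.card {a : α // P a ∧ ¬ Q a} := by
        rw [Nat.card_congr e1, Nat.card_congr e2]

/-- Number of weakly decreasing sequences of length `d` summing to `t`
(= partitions of `t` into at most `d` parts). -/
noncomputable def pc (d t : ℕ) : ℕ := Nat.card {y : Fin d → ℕ // Dec y ∧ ∑ i, y i = t}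

/-- Extension of a `Fin d` sequence by a trailing `0`. -/
def ext0 {d : ℕ} (z : Fin d → ℕ) : Fin (d + 1) → ℕ :=
  fun i => if h : (i : ℕ) < d then z ⟨i, h⟩ else 0

lemma sum_ext0 {d : ℕ} (z : Fin d → ℕ) : ∑ i, ext0 z i = ∑ i, z i := by
  rw [Fin.sum_univ_castSucc]
  have h1 : ext0 z (Fin.last d) = 0 := by
    simp [ext0]
  have h2 : ∀ i : Fin d, ext0 z i.castSucc = z i := by
    intro i
    unfold ext0
    rw [dif_pos (by simp)]
    exact congrArg z (Fin.ext (by simp))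
  rw [h1, add_zero]
  exact Finset.sum_congr rfl fun i _ => h2 i

lemma ext0_last {d : ℕ} (z : Fin d → ℕ) : ext0 z (Fin.last d) = 0 := by
  simp [ext0]

lemma dec_ext0 {d : ℕ} {z : Fin d → ℕ} (hz : Dec z) : Dec (ext0 z) := by
  intro i h
  by_cases h2 : (i : ℕ) + 1 < d
  · have hi : (i : ℕ) < d := by omega
    have e1 : ext0 z ⟨(i : ℕ) + 1, h⟩ = z ⟨(i : ℕ) + 1, h2⟩ := by
      unfold ext0
      rw [dif_pos (show ((⟨(i : ℕ) + 1, h⟩ : Fin (d + 1)) : ℕ) < d from h2)]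
    have e2 : ext0 z i = z ⟨(i : ℕ), hi⟩ := by
      unfold ext0
      rw [dif_pos hi]
    rw [e1, e2]
    exact hz ⟨(i : ℕ), hi⟩ (by simp only [Fin.val_mk]; omega)
  · have e1 : ext0 z ⟨(i : ℕ) + 1, h⟩ = 0 := by
      unfold ext0
      rw [dif_neg (show ¬ ((⟨(i : ℕ) + 1, h⟩ : Fin (d + 1)) : ℕ) < d from h2)]
    rw [e1]
    exact Nat.zero_le _

lemma card_last_zero (d t : ℕ) :
    Nat.card {y : Fin (d + 1) → ℕ //
        (Dec y ∧ ∑ i, y i = t) ∧ y (Fin.last d) = 0} = pc d t := by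
  apply Nat.card_congr
  refine Equiv.mk
    (fun y => ⟨fun i => y.1 ⟨(i : ℕ), Nat.lt_succ_of_lt i.isLt⟩, ?_, ?_⟩)
    (fun z => ⟨ext0 z.1, ⟨dec_ext0 z.2.1, ?_⟩, ext0_last z.1⟩) ?_ ?_
  · intro i h
    exact y.2.1.1 ⟨(i : ℕ), by omega⟩ (by simp only [Fin.val_mk]; omega)
  · have hs := y.2.1.2
    have hl := y.2.2
    rw [Fin.sum_univ_castSucc, hl, add_zero] at hs
    calc ∑ i : Fin d, y.1 ⟨(i : ℕ), Nat.lt_succ_of_lt i.isLt⟩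
        = ∑ i : Fin d, y.1 (Fin.castSucc i) :=
          Finset.sum_congr rfl fun i _ => congrArg y.1 (Fin.ext (by simp))
      _ = t := hs
  · rw [sum_ext0]
    exact z.2.2
  · intro y
    apply Subtype.ext
    funext i
    by_cases h : (i : ℕ) < d
    · show ext0 _ i = y.1 i
      unfold ext0
      rw [dif_pos h]
    · show ext0 _ i = y.1 i
      unfold ext0
      rw [dif_neg h]
      have hi : i = Fin.last d := Fin.ext (by
        have := i.isLt
        simp only [Fin.val_last]
        omega)
      rw [hi]
      exact (y.2.2).symm
  · intro z
    apply Subtype.ext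
    funext i
    show ext0 z.1 ⟨(i : ℕ), _⟩ = z.1 i
    unfold ext0
    rw [dif_pos (show ((⟨(i : ℕ), Nat.lt_succ_of_lt i.isLt⟩ : Fin (d + 1)) : ℕ) < d from i.isLt)]

lemma all_pos_of_last_pos {d : ℕ} {y : Fin (d + 1) → ℕ} (hdec : Dec y)
    (hl : y (Fin.last d) ≠ 0) : ∀ i, 1 ≤ y i := by
  intro i
  have h1 : y (Fin.last d) ≤ y i := dec_chain hdec i (Fin.last d) (Fin.le_last i)
  omega

lemma card_last_pos (d t : ℕ) (ht : d + 1 ≤ t) :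
    Nat.card {y : Fin (d + 1) → ℕ //
        (Dec y ∧ ∑ i, y i = t) ∧ ¬ y (Fin.last d) = 0} = pc (d + 1) (t - (d + 1)) := by
  apply Nat.card_congr
  refine Equiv.mk
    (fun y => ⟨fun i => y.1 i - 1, ?_, ?_⟩)
    (fun z => ⟨fun i => z.1 i + 1, ⟨?_, ?_⟩, ?_⟩) ?_ ?_
  · intro i h
    have hd := y.2.1.1 i h
    show y.1 ⟨(i : ℕ) + 1, h⟩ - 1 ≤ y.1 i - 1
    omega
  · have hpos := all_pos_of_last_pos y.2.1.1 y.2.2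
    show ∑ i, (y.1 i - 1) = t - (d + 1)
    rw [Finset.sum_tsub_distrib (f := y.1) (g := fun _ => 1) Finset.univ (fun i _ => hpos i)]
    have hs := y.2.1.2
    simp only [Finset.sum_const, Finset.card_univ, Fintype.card_fin, smul_eq_mul, mul_one]
    omega
  · intro i h
    have hd := z.2.1 i h
    show z.1 ⟨(i : ℕ) + 1, h⟩ + 1 ≤ z.1 i + 1
    omega
  · show ∑ i, (z.1 i + 1) = t
    rw [Finset.sum_add_distrib (f := z.1) (g := fun _ => 1)]
    have hs := z.2.2
    simp only [Finset.sum_const, Finset.card_univ, Fintype.card_fin, smul_eq_mul, mul_one]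
    omega
  · simp
  · intro y
    apply Subtype.ext
    funext i
    have hpos := all_pos_of_last_pos y.2.1.1 y.2.2
    show y.1 i - 1 + 1 = y.1 i
    have := hpos i
    omega
  · intro z
    apply Subtype.ext
    funext i
    show z.1 i + 1 - 1 = z.1 i
    omega

lemma card_last_pos_empty (d t : ℕ) (ht : t < d + 1) :
    Nat.card {y : Fin (d + 1) → ℕ //
        (Dec y ∧ ∑ i, y i = t) ∧ ¬ y (Fin.last d) = 0} = 0 := by
  have : IsEmpty {y : Fin (d + 1) → ℕ //
      (Dec y ∧ ∑ i, y i = t) ∧ ¬ y (Fin.last d) = 0} := by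
    constructor
    intro y
    have hpos := all_pos_of_last_pos y.2.1.1 y.2.2
    have h1 : ∑ i : Fin (d + 1), 1 ≤ ∑ i, y.1 i :=
      Finset.sum_le_sum fun i _ => hpos i
    simp only [Finset.sum_const, Finset.card_univ, Fintype.card_fin, smul_eq_mul, mul_one] at h1
    have := y.2.1.2
    omega
  exact Nat.card_of_isEmpty

lemma pc_succ (d t : ℕ) :
    pc (d + 1) t = pc d t + (if d + 1 ≤ t then pc (d + 1) (t - (d + 1)) else 0) := by
  haveI : Finite {y : Fin (d + 1) → ℕ // Dec y ∧ ∑ i, y i = t} := finite_aux _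
  have hsplit : Nat.card {y : Fin (d + 1) → ℕ // Dec y ∧ ∑ i, y i = t}
      = Nat.card {y : Fin (d + 1) → ℕ // (Dec y ∧ ∑ i, y i = t) ∧ y (Fin.last d) = 0}
        + Nat.card {y : Fin (d + 1) → ℕ //
            (Dec y ∧ ∑ i, y i = t) ∧ ¬ y (Fin.last d) = 0} :=
    card_split_pred (fun y : Fin (d + 1) → ℕ => Dec y ∧ ∑ i, y i = t)
      (fun y => y (Fin.last d) = 0)
  have h1 := card_last_zero d t
  by_cases ht : d + 1 ≤ t
  · rw [if_pos ht]
    exact hsplit.trans (congrArg₂ (· + ·) h1 (card_last_pos d t ht))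
  · rw [if_neg ht]
    exact hsplit.trans (congrArg₂ (· + ·) h1 (card_last_pos_empty d t (not_le.mp ht)))

lemma pc_zero (t : ℕ) : pc 0 t = if t = 0 then 1 else 0 := by
  unfold pc
  split_ifs with ht
  · subst ht
    haveI : Nonempty {y : Fin 0 → ℕ // Dec y ∧ ∑ i, y i = 0} :=
      ⟨⟨fun i => i.elim0, fun i => i.elim0, by simp⟩⟩
    haveI : Subsingleton {y : Fin 0 → ℕ // Dec y ∧ ∑ i, y i = 0} := by
      constructor
      intro a b
      apply Subtype.ext
      funext i
      exact i.elim0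
    exact Nat.card_unique
  · haveI : IsEmpty {y : Fin 0 → ℕ // Dec y ∧ ∑ i, y i = t} := by
      constructor
      intro y
      have := y.2.2
      simp at this
      omega
    exact Nat.card_of_isEmpty

lemma pcgen (d : ℕ) :
    (PowerSeries.mk fun t => (pc d t : ℤ))
      * ∏ i ∈ Finset.range d, (1 - PowerSeries.X ^ (i + 1)) = 1 := by
  induction d with
  | zero =>
    rw [Finset.prod_range_zero, mul_one]
    ext n
    rw [PowerSeries.coeff_mk, PowerSeries.coeff_one, pc_zero]
    split_ifs <;> simp
  | succ d ih =>
    have hrec : (PowerSeries.mk fun t => (pc (d + 1) t : ℤ))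
        - PowerSeries.X ^ (d + 1) * (PowerSeries.mk fun t => (pc (d + 1) t : ℤ))
        = PowerSeries.mk fun t => (pc d t : ℤ) := by
      ext t
      rw [map_sub, PowerSeries.coeff_X_pow_mul']
      simp only [PowerSeries.coeff_mk]
      have := pc_succ d t
      split_ifs with h
      · rw [if_pos h] at this
        push_cast [this]
        ring
      · rw [if_neg h] at this
        push_cast [this]
        ring
    calc (PowerSeries.mk fun t => (pc (d + 1) t : ℤ))
          * ∏ i ∈ Finset.range (d + 1), (1 - PowerSeries.X ^ (i + 1))
        = ((PowerSeries.mk fun t => (pc (d + 1) t : ℤ))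
            - PowerSeries.X ^ (d + 1) * (PowerSeries.mk fun t => (pc (d + 1) t : ℤ)))
          * ∏ i ∈ Finset.range d, (1 - PowerSeries.X ^ (i + 1)) := by
          rw [Finset.prod_range_succ]
          ring
      _ = (PowerSeries.mk fun t => (pc d t : ℤ))
          * ∏ i ∈ Finset.range d, (1 - PowerSeries.X ^ (i + 1)) := by rw [hrec]
      _ = 1 := ih

lemma card_compat_lt {d : ℕ} (σ : Equiv.Perm (Fin d)) (t : ℕ) (ht : t < majIdx σ) :
    Nat.card {x : Fin d → ℕ // Compat σ x ∧ ∑ i, x i = t} = 0 := by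
  haveI : IsEmpty {x : Fin d → ℕ // Compat σ x ∧ ∑ i, x i = t} := by
    constructor
    intro x
    have h1 : ∑ i, cfun σ i ≤ ∑ i, x.1 (σ i) :=
      Finset.sum_le_sum fun i _ => cfun_le x.2.1 i
    rw [← majIdx_eq_sum_cfun] at h1
    have h2 : ∑ i, x.1 (σ i) = ∑ i, x.1 i := Equiv.sum_comp σ x.1
    have h3 := x.2.2
    omega
  exact Nat.card_of_isEmpty

lemma card_compat_ge {d : ℕ} (σ : Equiv.Perm (Fin d)) (t : ℕ) (ht : majIdx σ ≤ t) :
    Nat.card {x : Fin d → ℕ // Compat σ x ∧ ∑ i, x i = t} = pc d (t - majIdx σ) := by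
  apply Nat.card_congr
  refine Equiv.mk
    (fun x => ⟨fun i => x.1 (σ i) - cfun σ i, ?_, ?_⟩)
    (fun y => ⟨fun j => y.1 (σ.symm j) + cfun σ (σ.symm j), ?_, ?_⟩) ?_ ?_
  · intro i h
    have e := cfun_succ σ i h
    have hc := x.2.1 i h
    have l1 := cfun_le x.2.1 ⟨(i : ℕ) + 1, h⟩
    have l2 := cfun_le x.2.1 i
    show x.1 (σ ⟨(i : ℕ) + 1, h⟩) - cfun σ ⟨(i : ℕ) + 1, h⟩ ≤ x.1 (σ i) - cfun σ i
    omega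
  · show ∑ i, (x.1 (σ i) - cfun σ i) = t - majIdx σ
    rw [Finset.sum_tsub_distrib (f := fun i => x.1 (σ i)) (g := cfun σ)
      Finset.univ (fun i _ => cfun_le x.2.1 i)]
    rw [Equiv.sum_comp σ x.1, x.2.2, ← majIdx_eq_sum_cfun]
  · intro i h
    have e := cfun_succ σ i h
    have hd := y.2.1 i h
    show y.1 (σ.symm (σ ⟨(i : ℕ) + 1, h⟩)) + cfun σ (σ.symm (σ ⟨(i : ℕ) + 1, h⟩)) + descAt σ i
      ≤ y.1 (σ.symm (σ i)) + cfun σ (σ.symm (σ i))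
    simp only [Equiv.symm_apply_apply]
    omega
  · have hcomp := Equiv.sum_comp σ (fun j => y.1 (σ.symm j) + cfun σ (σ.symm j))
    simp only [Equiv.symm_apply_apply] at hcomp
    show ∑ j, (y.1 (σ.symm j) + cfun σ (σ.symm j)) = t
    rw [← hcomp, Finset.sum_add_distrib, y.2.2, ← majIdx_eq_sum_cfun]
    omega
  · intro x
    apply Subtype.ext
    funext j
    show x.1 (σ (σ.symm j)) - cfun σ (σ.symm j) + cfun σ (σ.symm j) = x.1 j
    have hle := cfun_le x.2.1 (σ.symm j)
    rw [Equiv.apply_symm_apply] at hle ⊢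
    omega
  · intro y
    apply Subtype.ext
    funext i
    show y.1 (σ.symm (σ i)) + cfun σ (σ.symm (σ i)) - cfun σ i = y.1 i
    simp only [Equiv.symm_apply_apply]
    omega

lemma mk_compat {d : ℕ} (σ : Equiv.Perm (Fin d)) :
    (PowerSeries.mk fun t =>
        (Nat.card {x : Fin d → ℕ // Compat σ x ∧ ∑ i, x i = t} : ℤ))
      = PowerSeries.X ^ majIdx σ * PowerSeries.mk fun t => (pc d t : ℤ) := by
  ext t
  rw [PowerSeries.coeff_mk, PowerSeries.coeff_X_pow_mul']
  split_ifs with h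
  · rw [PowerSeries.coeff_mk, card_compat_ge σ t h]
  · rw [card_compat_lt σ t (by omega)]
    simp

lemma card_decomp {d : ℕ} (r : Fin d → Fin d → Prop) (hnat : ∀ j k, r j k → j ≤ k) (t : ℕ) :
    Nat.card {x : Fin d → ℕ // (∀ j k, r j k → x k ≤ x j) ∧ ∑ i, x i = t}
      = ∑ σ ∈ Finset.univ.filter
          (fun σ : Equiv.Perm (Fin d) => ∀ j k, r j k → σ.symm j ≤ σ.symm k),
          Nat.card {x : Fin d → ℕ // Compat σ x ∧ ∑ i, x i = t} := by
  classical
  set LinExt := fun σ : Equiv.Perm (Fin d) => ∀ j k, r j k → σ.symm j ≤ σ.symm k with hLE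
  have e : {x : Fin d → ℕ // (∀ j k, r j k → x k ≤ x j) ∧ ∑ i, x i = t}
      ≃ Σ σ : {σ : Equiv.Perm (Fin d) // LinExt σ},
          {x : Fin d → ℕ // Compat σ.1 x ∧ ∑ i, x i = t} :=
    { toFun := fun x =>
        ⟨⟨Tuple.sort (fun j => -(x.1 j : ℤ)),
          ppart_linext hnat ((compat_iff_sort _ x.1).mpr rfl) x.2.1⟩,
          ⟨x.1, (compat_iff_sort _ x.1).mpr rfl, x.2.2⟩⟩
      invFun := fun p => ⟨p.2.1, linext_compat_ppart p.2.2.1 p.1.2, p.2.2.2⟩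
      left_inv := fun x => rfl
      right_inv := fun p => by
        obtain ⟨⟨σ, hσ⟩, ⟨x, hc, hs⟩⟩ := p
        have hsort : Tuple.sort (fun j => -(x j : ℤ)) = σ :=
          ((compat_iff_sort σ x).mp hc).symm
        subst hsort
        rfl }
  rw [Nat.card_congr e]
  haveI : ∀ σ : {σ : Equiv.Perm (Fin d) // LinExt σ},
      Fintype {x : Fin d → ℕ // Compat σ.1 x ∧ ∑ i, x i = t} := fun σ =>
    @Fintype.ofFinite _ (finite_aux _)
  rw [Nat.card_eq_fintype_card, Fintype.card_sigma]
  rw [Finset.sum_subtype (p := LinExt) (Finset.univ.filter LinExt)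
    (by intro σ; simp only [Finset.mem_filter, Finset.mem_univ, true_and])
    (fun σ => Nat.card {x : Fin d → ℕ // Compat σ x ∧ ∑ i, x i = t})]
  refine Finset.sum_congr rfl fun σ _ => ?_
  rw [Nat.card_eq_fintype_card]

/-- **Stanley's P-partition lemma.** Let `⪯` (denoted `r`) be a naturally labeled partial
order on `{1,…,d}` (i.e. `j ⪯ k` implies `j ≤ k`). Then
`(∑_{t≥0} p_Π(t) z^t) ∏_{i=1}^d (1-z^i) = ∑_σ z^{maj σ}`,
the sum over all permutations `σ` whose associated chain is a linear extension of `Π`,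
i.e. such that `j ⪯ k` implies `σ⁻¹(j) ≤ σ⁻¹(k)`. -/
theorem ppartition_lemma (d : ℕ) (r : Fin d → Fin d → Prop)
    (hrefl : ∀ j, r j j) (htrans : ∀ j k l, r j k → r k l → r j l)
    (hantisymm : ∀ j k, r j k → r k j → j = k)
    (hnat : ∀ j k, r j k → j ≤ k) :
    (PowerSeries.mk fun t =>
        (Nat.card {x : Fin d → ℕ // (∀ j k, r j k → x k ≤ x j) ∧ ∑ i, x i = t} : ℤ))
      * ∏ i ∈ Finset.range d, (1 - PowerSeries.X ^ (i + 1))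
    = ∑ σ ∈ Finset.univ.filter
        (fun σ : Equiv.Perm (Fin d) => ∀ j k, r j k → σ.symm j ≤ σ.symm k),
        (PowerSeries.X : PowerSeries ℤ) ^ majIdx σ := by
  have hA : (PowerSeries.mk fun t =>
      (Nat.card {x : Fin d → ℕ // (∀ j k, r j k → x k ≤ x j) ∧ ∑ i, x i = t} : ℤ))
      = ∑ σ ∈ Finset.univ.filter
          (fun σ : Equiv.Perm (Fin d) => ∀ j k, r j k → σ.symm j ≤ σ.symm k),
          PowerSeries.mk fun t =>
            (Nat.card {x : Fin d → ℕ // Compat σ x ∧ ∑ i, x i = t} : ℤ) := by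
    ext t
    rw [PowerSeries.coeff_mk, map_sum]
    simp only [PowerSeries.coeff_mk]
    rw [card_decomp r hnat t]
    push_cast
    rfl
  rw [hA, Finset.sum_mul]
  refine Finset.sum_congr rfl fun σ _ => ?_
  rw [mk_compat σ, mul_assoc, pcgen d, mul_one]
end

section
/- Let Δ ⊂ ℝ^d be a lattice d-simplex with vertices v_0, v_1, …, v_d ∈ ℤ^d, and let Q := {Σ_{i=0}^d λ_i (v_i, 1) : 0 ≤ λ_i < 1} ⊂ ℝ^{d+1} be the half-open fundamental parallelepiped of the cone over Δ. Then, as an identity of formal power series in z, (1 + Σ_{t≥1} #(tΔ ∩ ℤ^d) z^t) · (1−z)^{d+1} = Σ_{t=0}^{d} h_t z^t, where h_t := #{y ∈ ℤ^{d+1} ∩ Q : y_{d+1} = t} is the number of lattice points of Q at height t. In particular, the Ehrhart series of Δ is a rational function whose numerator is a polynomial of degree at most d with nonnegative integer coefficients. -/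
open scoped Pointwise Classical
open Finset

namespace EhrhartAux

lemma nat_card_sigma {ι : Type*} [Fintype ι] (α : ι → Type*) (hF : ∀ i, Finite (α i)) :
    Nat.card (Σ i, α i) = ∑ i, Nat.card (α i) := by
  haveI := hF
  letI := fun i => Fintype.ofFinite (α i)
  rw [Nat.card_eq_fintype_card, Fintype.card_sigma]
  exact Finset.sum_congr rfl fun i _ => (Nat.card_eq_fintype_card).symm

lemma card_eq_sum_antidiagonal {X : Type*} (t : ℕ) (F : ℕ × ℕ → Type*) (hF : ∀ p, Finite (F p))
    (e : X ≃ Σ p : (Finset.HasAntidiagonal.antidiagonal t : Finset (ℕ × ℕ)), F p) :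
    Nat.card X = ∑ p ∈ Finset.HasAntidiagonal.antidiagonal t, Nat.card (F p) := by
  rw [Nat.card_congr e, nat_card_sigma (fun p : (Finset.HasAntidiagonal.antidiagonal t : Finset (ℕ × ℕ)) => F ↑p)
    (fun p => hF ↑p)]
  exact Finset.sum_coe_sort (Finset.HasAntidiagonal.antidiagonal t) (fun p => Nat.card (F p))

instance finite_comp (n k : ℕ) : Finite {m : Fin n → ℕ // ∑ i, m i = k} := by
  apply Finite.of_injective (fun m => (fun i => (⟨m.1 i, by
    have : m.1 i ≤ k :=
      le_trans (Finset.single_le_sum (fun i _ => Nat.zero_le (m.1 i)) (mem_univ i)) (le_of_eq m.2)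
    omega⟩ : Fin (k+1))) : _ → (Fin n → Fin (k+1)))
  intro a b h
  ext i
  exact congrArg Fin.val (congrFun h i)

lemma card_comp_succ (n k : ℕ) : Nat.card {m : Fin (n+1) → ℕ // ∑ i, m i = k}
    = ∑ p ∈ Finset.HasAntidiagonal.antidiagonal k, Nat.card {m : Fin n → ℕ // ∑ i, m i = p.1} := by
  apply card_eq_sum_antidiagonal k (fun p => {m : Fin n → ℕ // ∑ i, m i = p.1})
    (fun p => finite_comp n p.1)
  refine (Equiv.ofBijective (fun x : (Σ p : (Finset.HasAntidiagonal.antidiagonal k : Finset (ℕ × ℕ)),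
      {m : Fin n → ℕ // ∑ i, m i = (p : ℕ × ℕ).1}) =>
    (⟨Fin.snoc x.2.1 (x.1 : ℕ × ℕ).2, by
      rw [Fin.sum_univ_castSucc]
      simp only [Fin.snoc_castSucc, Fin.snoc_last]
      rw [x.2.2]
      exact Finset.HasAntidiagonal.mem_antidiagonal.mp x.1.2⟩ :
      {m : Fin (n+1) → ℕ // ∑ i, m i = k})) ⟨?_, ?_⟩).symm
  · rintro ⟨⟨⟨a, b⟩, hp⟩, ⟨m, hm⟩⟩ ⟨⟨⟨a', b'⟩, hp'⟩, ⟨m', hm'⟩⟩ h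
    simp only [Subtype.mk.injEq] at h
    have hb : b = b' := by
      have := congrFun h (Fin.last n); simpa using this
    have hmm : m = m' := funext fun i => by
      have := congrFun h i.castSucc; simpa using this
    rw [Finset.HasAntidiagonal.mem_antidiagonal] at hp hp'
    have ha : a = a' := by omega
    subst hb hmm ha
    rfl
  · rintro ⟨m, hm⟩
    refine ⟨⟨⟨⟨∑ i : Fin n, m i.castSucc, m (Fin.last n)⟩, by
      rw [Finset.HasAntidiagonal.mem_antidiagonal, ← Fin.sum_univ_castSucc]; exact hm⟩,
      ⟨Fin.init m, rfl⟩⟩, ?_⟩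
    exact Subtype.ext (Fin.snoc_init_self m)

lemma compSeries (n : ℕ) :
    (PowerSeries.mk fun k => (Nat.card {m : Fin n → ℕ // ∑ i, m i = k} : ℤ))
      * (1 - PowerSeries.X) ^ n = 1 := by
  induction n with
  | zero =>
    rw [pow_zero, mul_one]
    ext k
    rw [PowerSeries.coeff_mk, PowerSeries.coeff_one]
    cases k with
    | zero =>
      simp only [if_pos rfl]
      norm_cast
      exact Nat.card_eq_one_iff_unique.mpr ⟨inferInstance, ⟨⟨fun i => i.elim0, by simp⟩⟩⟩
    | succ j =>
      simp only [Nat.succ_ne_zero, if_false]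
      norm_cast
      have : IsEmpty {m : Fin 0 → ℕ // ∑ i, m i = j + 1} := ⟨fun m => by
        have := m.2; simp at this⟩
      exact Nat.card_of_isEmpty
  | succ n ih =>
    have step : (PowerSeries.mk fun k => (Nat.card {m : Fin (n+1) → ℕ // ∑ i, m i = k} : ℤ))
        = (PowerSeries.mk fun k => (Nat.card {m : Fin n → ℕ // ∑ i, m i = k} : ℤ))
          * PowerSeries.mk 1 := by
      ext k
      rw [PowerSeries.coeff_mk, PowerSeries.coeff_mul, card_comp_succ]
      push_cast
      exact Finset.sum_congr rfl fun p _ => by simp [PowerSeries.coeff_mk]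
    calc (PowerSeries.mk fun k => (Nat.card {m : Fin (n+1) → ℕ // ∑ i, m i = k} : ℤ))
          * (1 - PowerSeries.X) ^ (n+1)
        = ((PowerSeries.mk fun k => (Nat.card {m : Fin n → ℕ // ∑ i, m i = k} : ℤ))
            * (1 - PowerSeries.X) ^ n) * (PowerSeries.mk 1 * (1 - PowerSeries.X)) := by
          rw [step]; ring
      _ = 1 := by rw [PowerSeries.mk_one_mul_one_sub_eq_one, ih, mul_one]

section Geometry

variable {d : ℕ} {v : Fin (d + 1) → Fin d → ℤ} {w : Fin (d + 1) → Fin (d + 1) → ℝ}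
  {Q : Set (Fin (d + 1) → ℝ)}

lemma wlast (hw : ∀ i, w i = Fin.snoc (fun j => (v i j : ℝ)) 1) (i : Fin (d + 1)) :
    w i (Fin.last d) = 1 := by rw [hw]; simp

lemma wcast (hw : ∀ i, w i = Fin.snoc (fun j => (v i j : ℝ)) 1) (i : Fin (d + 1)) (j : Fin d) :
    w i (Fin.castSucc j) = (v i j : ℝ) := by rw [hw]; simp

lemma castWj (hw : ∀ i, w i = Fin.snoc (fun j => (v i j : ℝ)) 1) (i : Fin (d + 1))
    (j : Fin (d + 1)) : (((Fin.snoc (v i) 1 : Fin (d + 1) → ℤ) j : ℤ) : ℝ) = w i j := by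
  rw [hw]
  refine Fin.lastCases ?_ (fun j => ?_) j <;> simp

lemma sum_w_last (hw : ∀ i, w i = Fin.snoc (fun j => (v i j : ℝ)) 1) (lam : Fin (d + 1) → ℝ) :
    (∑ i, lam i • w i) (Fin.last d) = ∑ i, lam i := by
  rw [Finset.sum_apply]
  exact Finset.sum_congr rfl fun i _ => by simp [wlast hw]

lemma sum_w_cast (hw : ∀ i, w i = Fin.snoc (fun j => (v i j : ℝ)) 1) (lam : Fin (d + 1) → ℝ)
    (j : Fin d) : (∑ i, lam i • w i) (Fin.castSucc j) = ∑ i, lam i * (v i j : ℝ) := by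
  rw [Finset.sum_apply]
  exact Finset.sum_congr rfl fun i _ => by simp [wcast hw]

lemma huniq (hw : ∀ i, w i = Fin.snoc (fun j => (v i j : ℝ)) 1)
    (hv : AffineIndependent ℝ (fun i => fun j => (v i j : ℝ)))
    (a b : Fin (d + 1) → ℝ) (hab : ∑ i, a i • w i = ∑ i, b i • w i) : a = b := by
  have h0 : ∑ i, (a i - b i) • w i = 0 := by
    simp only [sub_smul, Finset.sum_sub_distrib, hab, sub_self]
  have hsum0 : ∑ i, (a i - b i) = 0 := by
    have := congrFun h0 (Fin.last d)
    simpa [Finset.sum_apply, wlast hw] using this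
  have hv0 : ∑ i, (a i - b i) • (fun j => (v i j : ℝ)) = 0 := by
    funext j
    have := congrFun h0 (Fin.castSucc j)
    simpa [Finset.sum_apply, wcast hw] using this
  have := affineIndependent_iff.mp hv Finset.univ (fun i => a i - b i) hsum0 hv0
  funext i
  have hi := this i (Finset.mem_univ i)
  linarith

lemma memHull (x : Fin d → ℝ) :
    x ∈ convexHull ℝ (Set.range fun i => fun j => (v i j : ℝ)) ↔
      ∃ μ : Fin (d + 1) → ℝ, (∀ i, 0 ≤ μ i) ∧ ∑ i, μ i = 1 ∧
        x = ∑ i, μ i • (fun j => (v i j : ℝ)) := by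
  rw [convexHull_range_eq_exists_affineCombination]
  constructor
  · rintro ⟨s, wt, hw0, hw1, rfl⟩
    have hnn : ∀ i, 0 ≤ (if i ∈ s then wt i else 0) := by
      intro i
      by_cases hi : i ∈ s
      · simpa [hi] using hw0 i hi
      · simp [hi]
    refine ⟨fun i => if i ∈ s then wt i else 0, hnn, ?_, ?_⟩
    · rw [← hw1]
      rw [Finset.sum_ite_mem, Finset.univ_inter]
    · rw [Finset.affineCombination_eq_linear_combination s _ _ hw1]
      rw [← Finset.sum_subset (Finset.subset_univ s)]
      · exact Finset.sum_congr rfl fun i hi => by simp [hi]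
      · intro i _ hi; simp [hi]
  · rintro ⟨μ, h0, h1, rfl⟩
    refine ⟨Finset.univ, μ, fun i _ => h0 i, h1, ?_⟩
    rw [Finset.affineCombination_eq_linear_combination _ _ _ h1]

lemma mem_smul_hull (t : ℕ) (ht : t ≠ 0) (x : Fin d → ℝ) :
    x ∈ (t : ℝ) • convexHull ℝ (Set.range fun i => fun j => (v i j : ℝ)) ↔
      ∃ lam : Fin (d + 1) → ℝ, (∀ i, 0 ≤ lam i) ∧ ∑ i, lam i = (t : ℝ) ∧
        x = ∑ i, lam i • (fun j => (v i j : ℝ)) := by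
  have htR : (0 : ℝ) < (t : ℝ) := by exact_mod_cast Nat.pos_of_ne_zero ht
  rw [Set.mem_smul_set]
  constructor
  · rintro ⟨z, hz, rfl⟩
    obtain ⟨μ, h0, h1, rfl⟩ := (memHull z).mp hz
    refine ⟨fun i => (t : ℝ) * μ i, fun i => mul_nonneg htR.le (h0 i), ?_, ?_⟩
    · rw [← Finset.mul_sum, h1, mul_one]
    · rw [Finset.smul_sum]
      exact Finset.sum_congr rfl fun i _ => by rw [smul_smul]
  · rintro ⟨lam, h0, h1, rfl⟩
    refine ⟨∑ i, ((t : ℝ)⁻¹ * lam i) • (fun j => (v i j : ℝ)), ?_, ?_⟩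
    · refine (memHull _).mpr ⟨fun i => (t : ℝ)⁻¹ * lam i,
        fun i => mul_nonneg (inv_nonneg.mpr htR.le) (h0 i), ?_, rfl⟩
      rw [← Finset.mul_sum, h1, inv_mul_cancel₀ (ne_of_gt htR)]
    · rw [Finset.smul_sum]
      refine Finset.sum_congr rfl fun i _ => ?_
      rw [smul_smul, ← mul_assoc, mul_inv_cancel₀ (ne_of_gt htR), one_mul]

lemma card_cone_pos (hw : ∀ i, w i = Fin.snoc (fun j => (v i j : ℝ)) 1) (t : ℕ) (ht : t ≠ 0) :
    Nat.card {x : Fin d → ℤ //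
        (fun j => (x j : ℝ)) ∈ (t : ℝ) • convexHull ℝ (Set.range fun i => fun j => (v i j : ℝ))}
      = Nat.card {y : Fin (d + 1) → ℤ // ∃ lam : Fin (d + 1) → ℝ, (∀ i, 0 ≤ lam i) ∧
          ((fun j => ((y j : ℤ) : ℝ)) = ∑ i, lam i • w i) ∧ ∑ i, lam i = (t : ℝ)} := by
  refine Nat.card_congr (Equiv.ofBijective (fun x => ⟨Fin.snoc x.1 (t : ℤ), ?_⟩) ⟨?_, ?_⟩)
  · obtain ⟨lam, h0, h1, h2⟩ := (mem_smul_hull t ht _).mp x.2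
    refine ⟨lam, h0, ?_, h1⟩
    funext j
    refine Fin.lastCases ?_ (fun j => ?_) j
    · rw [sum_w_last hw, h1]; simp
    · rw [sum_w_cast hw]
      have := congrFun h2 j
      simp only [Finset.sum_apply, Pi.smul_apply, smul_eq_mul] at this
      simpa using this
  · rintro ⟨x, hx⟩ ⟨x', hx'⟩ h
    simp only [Subtype.mk.injEq] at h
    refine Subtype.ext (funext fun j => ?_)
    have := congrFun h (Fin.castSucc j)
    simpa using this
  · rintro ⟨y, lam, h0, h1, h2⟩
    have hyl : y (Fin.last d) = (t : ℤ) := by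
      have : ((y (Fin.last d) : ℤ) : ℝ) = ((t : ℤ) : ℝ) := by
        have := congrFun h1 (Fin.last d)
        rw [sum_w_last hw, h2] at this
        simpa using this
      exact_mod_cast this
    refine ⟨⟨Fin.init y, ?_⟩, ?_⟩
    · refine (mem_smul_hull t ht _).mpr ⟨lam, h0, h2, ?_⟩
      funext j
      have := congrFun h1 (Fin.castSucc j)
      rw [sum_w_cast hw] at this
      simp only [Finset.sum_apply, Pi.smul_apply, smul_eq_mul]
      simpa [Fin.init] using this
    · refine Subtype.ext ?_
      simp only
      rw [← hyl]
      exact Fin.snoc_init_self y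

lemma card_cone_zero (hw : ∀ i, w i = Fin.snoc (fun j => (v i j : ℝ)) 1) :
    Nat.card {y : Fin (d + 1) → ℤ // ∃ lam : Fin (d + 1) → ℝ, (∀ i, 0 ≤ lam i) ∧
        ((fun j => ((y j : ℤ) : ℝ)) = ∑ i, lam i • w i) ∧ ∑ i, lam i = ((0 : ℕ) : ℝ)} = 1 := by
  have hzero : ∀ y : Fin (d + 1) → ℤ, ∀ lam : Fin (d + 1) → ℝ, (∀ i, 0 ≤ lam i) →
      ((fun j => ((y j : ℤ) : ℝ)) = ∑ i, lam i • w i) → ∑ i, lam i = ((0 : ℕ) : ℝ) → y = 0 := by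
    intro y lam h0 h1 h2
    have hl : ∀ i ∈ Finset.univ, lam i = 0 := by
      rw [← Finset.sum_eq_zero_iff_of_nonneg (fun i _ => h0 i)]
      simpa using h2
    funext j
    have := congrFun h1 j
    have hz : (∑ i, lam i • w i) j = 0 := by
      rw [Finset.sum_apply]
      exact Finset.sum_eq_zero fun i hi => by rw [hl i (Finset.mem_univ i)]; simp
    rw [hz] at this
    exact_mod_cast this
  rw [Nat.card_eq_one_iff_unique]
  constructor
  · constructor
    rintro ⟨y, lam, h0, h1, h2⟩ ⟨y', lam', h0', h1', h2'⟩
    exact Subtype.ext (show y = y' by rw [hzero y lam h0 h1 h2, hzero y' lam' h0' h1' h2'])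
  · refine ⟨⟨0, fun _ => 0, fun i => le_refl 0, ?_, by simp⟩⟩
    funext j
    simp

lemma qfin (hQ : Q = {y | ∃ lam : Fin (d + 1) → ℝ, (∀ i, 0 ≤ lam i ∧ lam i < 1) ∧
      y = ∑ i, lam i • w i}) :
    Set.Finite {y : Fin (d + 1) → ℤ | (fun j => (y j : ℝ)) ∈ Q} := by
  set M : ℝ := ∑ i, ∑ j', |w i j'| with hM
  set B : ℤ := ⌈M⌉ with hB
  apply Set.Finite.subset
    (Finset.Icc (fun _ => -B) (fun _ => B) : Finset (Fin (d + 1) → ℤ)).finite_toSet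
  intro y hy
  obtain ⟨lam, hb, heq⟩ := hQ ▸ hy
  have hbd : ∀ j, |(y j : ℝ)| ≤ M := by
    intro j
    have hyj : (y j : ℝ) = ∑ i, lam i * w i j := by
      have := congrFun heq j
      simpa [Finset.sum_apply] using this
    rw [hyj]
    calc |∑ i, lam i * w i j| ≤ ∑ i, |lam i * w i j| := Finset.abs_sum_le_sum_abs _ _
      _ ≤ ∑ i, |w i j| := by
          refine Finset.sum_le_sum fun i _ => ?_
          rw [abs_mul]
          have h1 : |lam i| ≤ 1 := by
            rw [abs_le]; constructor <;> [linarith [(hb i).1]; linarith [(hb i).2]]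
          nlinarith [abs_nonneg (w i j)]
      _ ≤ M := by
          rw [hM]
          refine Finset.sum_le_sum fun i _ => ?_
          exact Finset.single_le_sum (f := fun j' => |w i j'|) (fun _ _ => abs_nonneg _)
            (Finset.mem_univ j)
  simp only [Finset.coe_Icc, Set.mem_Icc, Pi.le_def]
  constructor <;> intro j
  · have := (abs_le.mp (hbd j)).1
    have hMB : M ≤ (B : ℝ) := Int.le_ceil M
    have : -(B : ℝ) ≤ (y j : ℝ) := by linarith
    exact_mod_cast this
  · have := (abs_le.mp (hbd j)).2
    have hMB : M ≤ (B : ℝ) := Int.le_ceil M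
    have : (y j : ℝ) ≤ (B : ℝ) := by linarith
    exact_mod_cast this

lemma slice_finite (hQ : Q = {y | ∃ lam : Fin (d + 1) → ℝ, (∀ i, 0 ≤ lam i ∧ lam i < 1) ∧
      y = ∑ i, lam i • w i}) (s : ℤ) :
    Finite {y : Fin (d + 1) → ℤ // (fun j => (y j : ℝ)) ∈ Q ∧ y (Fin.last d) = s} := by
  have : Set.Finite {y : Fin (d + 1) → ℤ | (fun j => (y j : ℝ)) ∈ Q ∧ y (Fin.last d) = s} :=
    (qfin hQ).subset fun y hy => hy.1
  exact this.to_subtype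

lemma slice_empty (hw : ∀ i, w i = Fin.snoc (fun j => (v i j : ℝ)) 1)
    (hQ : Q = {y | ∃ lam : Fin (d + 1) → ℝ, (∀ i, 0 ≤ lam i ∧ lam i < 1) ∧
      y = ∑ i, lam i • w i}) (s : ℕ) (hs : d < s) :
    IsEmpty {y : Fin (d + 1) → ℤ // (fun j => (y j : ℝ)) ∈ Q ∧ y (Fin.last d) = (s : ℤ)} := by
  constructor
  rintro ⟨y, hy, hl⟩
  obtain ⟨lam, hb, heq⟩ := hQ ▸ hy
  have h1 : (s : ℝ) = ∑ i, lam i := by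
    have := congrFun heq (Fin.last d)
    rw [sum_w_last hw] at this
    rw [← this, hl]
    simp
  have h2 : ∑ i, lam i < (d + 1 : ℝ) := by
    calc ∑ i, lam i < ∑ _i : Fin (d + 1), (1 : ℝ) :=
          Finset.sum_lt_sum_of_nonempty Finset.univ_nonempty fun i _ => (hb i).2
      _ = (d + 1 : ℝ) := by simp
  rw [← h1] at h2
  have : (s : ℝ) < (d + 1 : ℝ) := h2
  have : s < d + 1 := by exact_mod_cast this
  omega


lemma master (hw : ∀ i, w i = Fin.snoc (fun j => (v i j : ℝ)) 1)
    (hv : AffineIndependent ℝ (fun i => fun j => (v i j : ℝ)))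
    (hQ : Q = {y | ∃ lam : Fin (d + 1) → ℝ, (∀ i, 0 ≤ lam i ∧ lam i < 1) ∧
      y = ∑ i, lam i • w i}) (t : ℕ) :
    Nat.card {y : Fin (d + 1) → ℤ // ∃ lam : Fin (d + 1) → ℝ, (∀ i, 0 ≤ lam i) ∧
        ((fun j => ((y j : ℤ) : ℝ)) = ∑ i, lam i • w i) ∧ ∑ i, lam i = (t : ℝ)}
      = ∑ p ∈ Finset.HasAntidiagonal.antidiagonal t,
          Nat.card {y : Fin (d + 1) → ℤ //
              (fun j => (y j : ℝ)) ∈ Q ∧ y (Fin.last d) = (p.1 : ℤ)}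
            * Nat.card {m : Fin (d + 1) → ℕ // ∑ i, m i = p.2} := by
  classical
  have castsum : ∀ (q : Fin (d + 1) → ℤ) (m : Fin (d + 1) → ℕ) (j : Fin (d + 1)),
      (((q + ∑ i, (m i : ℤ) • (Fin.snoc (v i) 1 : Fin (d + 1) → ℤ)) j : ℤ) : ℝ)
        = (q j : ℝ) + ∑ i, (m i : ℝ) * w i j := by
    intro q m j
    simp only [Pi.add_apply, Finset.sum_apply, Pi.smul_apply, smul_eq_mul]
    push_cast
    refine congrArg _ (Finset.sum_congr rfl fun i _ => ?_)
    rw [castWj hw]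
  have qlam : ∀ (q : Fin (d + 1) → ℤ) (s : ℕ), (fun j => (q j : ℝ)) ∈ Q →
      q (Fin.last d) = (s : ℤ) → ∃ lam : Fin (d + 1) → ℝ, (∀ i, 0 ≤ lam i ∧ lam i < 1) ∧
        ((fun j => (q j : ℝ)) = ∑ i, lam i • w i) ∧ ∑ i, lam i = (s : ℝ) := by
    intro q s hq hl
    obtain ⟨lam, hb, heq⟩ := hQ ▸ hq
    refine ⟨lam, hb, heq, ?_⟩
    have := congrFun heq (Fin.last d)
    rw [sum_w_last hw] at this
    rw [← this, hl]
    simp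
  have e : {y : Fin (d + 1) → ℤ // ∃ lam : Fin (d + 1) → ℝ, (∀ i, 0 ≤ lam i) ∧
        ((fun j => ((y j : ℤ) : ℝ)) = ∑ i, lam i • w i) ∧ ∑ i, lam i = (t : ℝ)}
      ≃ Σ p : (Finset.HasAntidiagonal.antidiagonal t : Finset (ℕ × ℕ)),
          ({y : Fin (d + 1) → ℤ //
              (fun j => (y j : ℝ)) ∈ Q ∧ y (Fin.last d) = (((p : ℕ × ℕ).1 : ℕ) : ℤ)}
            × {m : Fin (d + 1) → ℕ // ∑ i, m i = (p : ℕ × ℕ).2}) := by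
    refine (Equiv.ofBijective (fun x => ⟨x.2.1.1 + ∑ i, (x.2.2.1 i : ℤ) •
      (Fin.snoc (v i) 1 : Fin (d + 1) → ℤ), by
        obtain ⟨⟨⟨s, k⟩, hp⟩, ⟨q, hq⟩, ⟨m, hm⟩⟩ := x
        obtain ⟨lam, hb, heq, hsum⟩ := qlam q s hq.1 hq.2
        refine ⟨fun i => lam i + m i, fun i => add_nonneg (hb i).1 (Nat.cast_nonneg _), ?_, ?_⟩
        · funext j
          rw [castsum q m j]
          have hqj := congrFun heq j
          rw [hqj]
          simp only [Finset.sum_apply, Pi.smul_apply, smul_eq_mul, add_mul,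
            Finset.sum_add_distrib]
        · rw [Finset.sum_add_distrib, hsum]
          have hk : ∑ i, ((m i : ℝ)) = (k : ℝ) := by
            rw [← Nat.cast_sum, hm]
          rw [hk]
          have := Finset.HasAntidiagonal.mem_antidiagonal.mp hp
          exact_mod_cast this⟩) ⟨?_, ?_⟩).symm
    · -- injective
      rintro ⟨⟨⟨s, k⟩, hp⟩, ⟨q, hq⟩, ⟨m, hm⟩⟩ ⟨⟨⟨s₂, k₂⟩, hp₂⟩, ⟨q₂, hq₂⟩, ⟨m₂, hm₂⟩⟩ h
      simp only [Subtype.mk.injEq] at h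
      obtain ⟨lam, hb, heq, hsum⟩ := qlam q s hq.1 hq.2
      obtain ⟨lam₂, hb₂, heq₂, hsum₂⟩ := qlam q₂ s₂ hq₂.1 hq₂.2
      have hcast : ∀ (q' : Fin (d + 1) → ℤ) (m' : Fin (d + 1) → ℕ) (lam' : Fin (d + 1) → ℝ),
          ((fun j => (q' j : ℝ)) = ∑ i, lam' i • w i) →
          (fun j => (((q' + ∑ i, (m' i : ℤ) • (Fin.snoc (v i) 1 : Fin (d + 1) → ℤ)) j : ℤ) : ℝ))
            = ∑ i, (lam' i + (m' i : ℝ)) • w i := by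
        intro q' m' lam' heq'
        funext j
        rw [castsum q' m' j]
        have := congrFun heq' j
        rw [this]
        simp only [Finset.sum_apply, Pi.smul_apply, smul_eq_mul, add_mul,
          Finset.sum_add_distrib]
      have hkey : (fun i => lam i + (m i : ℝ)) = (fun i => lam₂ i + (m₂ i : ℝ)) := by
        apply huniq hw hv
        have e1 := hcast q m lam heq
        have e2 := hcast q₂ m₂ lam₂ heq₂
        rw [← e1, ← e2, h]
      have hmm : m = m₂ := by
        funext i
        have hi := congrFun hkey i
        have b1 := (hb i).1; have b2 := (hb i).2
        have b3 := (hb₂ i).1; have b4 := (hb₂ i).2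
        have h1 : ((m i : ℤ) : ℝ) < ((m₂ i : ℤ) : ℝ) + 1 := by push_cast; linarith
        have h2 : ((m₂ i : ℤ) : ℝ) < ((m i : ℤ) : ℝ) + 1 := by push_cast; linarith
        have h1' : (m i : ℤ) < (m₂ i : ℤ) + 1 := by exact_mod_cast h1
        have h2' : (m₂ i : ℤ) < (m i : ℤ) + 1 := by exact_mod_cast h2
        omega
      have hqq : q = q₂ := by
        have := h
        rw [hmm] at this
        exact add_right_cancel this
      have hss : s = s₂ := by
        have e1 : ((s : ℤ)) = ((s₂ : ℤ)) := by rw [← hq.2, ← hq₂.2, hqq]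
        exact_mod_cast e1
      have hkk : k = k₂ := by
        have e1 := Finset.HasAntidiagonal.mem_antidiagonal.mp hp
        have e2 := Finset.HasAntidiagonal.mem_antidiagonal.mp hp₂
        omega
      subst hss hkk hmm hqq
      rfl
    · -- surjective
      rintro ⟨y, lam, h0, h1, h2⟩
      set m : Fin (d + 1) → ℕ := fun i => ⌊lam i⌋₊ with hm
      set q : Fin (d + 1) → ℤ :=
        y - ∑ i, (m i : ℤ) • (Fin.snoc (v i) 1 : Fin (d + 1) → ℤ) with hq
      have hqy : q + ∑ i, (m i : ℤ) • (Fin.snoc (v i) 1 : Fin (d + 1) → ℤ) = y := by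
        rw [hq]; ring
      have hqcast : (fun j => (q j : ℝ)) = ∑ i, (lam i - (m i : ℝ)) • w i := by
        funext j
        have hyj : ((y j : ℤ) : ℝ) = (q j : ℝ) + ∑ i, (m i : ℝ) * w i j := by
          rw [← hqy]; exact castsum q m j
        have h1j := congrFun h1 j
        simp only [Finset.sum_apply, Pi.smul_apply, smul_eq_mul] at h1j ⊢
        simp only [sub_mul, Finset.sum_sub_distrib]
        have : (q j : ℝ) = ((y j : ℤ) : ℝ) - ∑ i, (m i : ℝ) * w i j := by linarith
        rw [this, h1j]
      have hmu0 : ∀ i, 0 ≤ lam i - (m i : ℝ) := fun i => by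
        have := Nat.floor_le (h0 i); rw [hm]; simpa using this
      have hmu1 : ∀ i, lam i - (m i : ℝ) < 1 := fun i => by
        have := Nat.lt_floor_add_one (lam i); rw [hm]; simp only; linarith
      have hqQ : (fun j => (q j : ℝ)) ∈ Q := by
        rw [hQ]
        exact ⟨fun i => lam i - (m i : ℝ), fun i => ⟨hmu0 i, hmu1 i⟩, hqcast⟩
      have hql : ((q (Fin.last d) : ℤ) : ℝ) = ∑ i, (lam i - (m i : ℝ)) := by
        have := congrFun hqcast (Fin.last d)
        rw [sum_w_last hw] at this
        exact this
      have hql0 : 0 ≤ q (Fin.last d) := by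
        have : (0 : ℝ) ≤ ((q (Fin.last d) : ℤ) : ℝ) := by
          rw [hql]; exact Finset.sum_nonneg fun i _ => hmu0 i
        exact_mod_cast this
      set s : ℕ := (q (Fin.last d)).toNat with hs
      set k : ℕ := ∑ i, m i with hk
      have hsz : ((s : ℕ) : ℤ) = q (Fin.last d) := Int.toNat_of_nonneg hql0
      have hsum : s + k = t := by
        have hr : ((s : ℕ) : ℝ) + ((k : ℕ) : ℝ) = (t : ℝ) := by
          have e1 : ((s : ℕ) : ℝ) = ∑ i, (lam i - (m i : ℝ)) := by
            rw [← hql]; exact_mod_cast congrArg (fun z : ℤ => (z : ℝ)) hsz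
          have e2 : ((k : ℕ) : ℝ) = ∑ i, (m i : ℝ) := by
            rw [hk]; push_cast; rfl
          rw [e1, e2, ← h2]
          rw [← Finset.sum_add_distrib]
          exact Finset.sum_congr rfl fun i _ => by ring
        exact_mod_cast hr
      exact ⟨⟨⟨⟨s, k⟩, Finset.HasAntidiagonal.mem_antidiagonal.mpr hsum⟩, ⟨q, hqQ, hsz.symm ▸ rfl⟩, ⟨m, rfl⟩⟩,
        Subtype.ext hqy⟩
  rw [card_eq_sum_antidiagonal t
    (fun p => ({y : Fin (d + 1) → ℤ //
        (fun j => (y j : ℝ)) ∈ Q ∧ y (Fin.last d) = ((p.1 : ℕ) : ℤ)}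
      × {m : Fin (d + 1) → ℕ // ∑ i, m i = p.2}))
    (fun p => by
      haveI := slice_finite hQ ((p.1 : ℕ) : ℤ)
      exact inferInstance) e]
  exact Finset.sum_congr rfl fun p _ => Nat.card_prod _ _

end Geometry

end EhrhartAux


open scoped Pointwise Classical

/-- **The Ehrhart series of a lattice simplex.** Let `Δ ⊂ ℝ^d` be a lattice `d`-simplex with
vertices `v_0, …, v_d ∈ ℤ^d`, and let `Q ⊂ ℝ^{d+1}` be the half-open fundamental
parallelepiped of the cone over `Δ`, spanned by the lifted vertices `w_i = (v_i, 1)`.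
Then `(1 + ∑_{t≥1} #(tΔ ∩ ℤ^d) z^t)(1-z)^{d+1} = ∑_{t=0}^{d} h_t z^t`, where `h_t` is the
number of lattice points of `Q` at height `t`. -/
theorem ehrhart_series_simplex (d : ℕ) (v : Fin (d + 1) → Fin d → ℤ)
    (hv : AffineIndependent ℝ (fun i => fun j => (v i j : ℝ)))
    (w : Fin (d + 1) → Fin (d + 1) → ℝ)
    (hw : ∀ i, w i = Fin.snoc (fun j => (v i j : ℝ)) 1)
    (Δ : Set (Fin d → ℝ))
    (hΔ : Δ = convexHull ℝ (Set.range fun i => fun j => (v i j : ℝ)))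
    (Q : Set (Fin (d + 1) → ℝ))
    (hQ : Q = {y | ∃ lam : Fin (d + 1) → ℝ, (∀ i, 0 ≤ lam i ∧ lam i < 1) ∧
      y = ∑ i, lam i • w i}) :
    (PowerSeries.mk fun t => if t = 0 then (1 : ℤ) else
        (Nat.card {x : Fin d → ℤ // (fun j => (x j : ℝ)) ∈ (t : ℝ) • Δ} : ℤ))
      * (1 - PowerSeries.X) ^ (d + 1)
    = ∑ t ∈ Finset.range (d + 1),
        (PowerSeries.C : ℤ →+* PowerSeries ℤ)
          (Nat.card {y : Fin (d + 1) → ℤ //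
            (fun j => (y j : ℝ)) ∈ Q ∧ y (Fin.last d) = (t : ℤ)} : ℤ)
          * PowerSeries.X ^ t := by
  classical
  have hAH : (PowerSeries.mk fun t => if t = 0 then (1 : ℤ) else
        (Nat.card {x : Fin d → ℤ // (fun j => (x j : ℝ)) ∈ (t : ℝ) • Δ} : ℤ))
      = (∑ t ∈ Finset.range (d + 1),
          (PowerSeries.C : ℤ →+* PowerSeries ℤ)
            (Nat.card {y : Fin (d + 1) → ℤ //
              (fun j => (y j : ℝ)) ∈ Q ∧ y (Fin.last d) = (t : ℤ)} : ℤ)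
            * PowerSeries.X ^ t)
        * PowerSeries.mk (fun k => (Nat.card {m : Fin (d + 1) → ℕ // ∑ i, m i = k} : ℤ)) := by
    ext t
    rw [PowerSeries.coeff_mk, PowerSeries.coeff_mul]
    have hH : ∀ s : ℕ, (PowerSeries.coeff s) (∑ u ∈ Finset.range (d + 1),
        (PowerSeries.C : ℤ →+* PowerSeries ℤ)
          (Nat.card {y : Fin (d + 1) → ℤ //
            (fun j => (y j : ℝ)) ∈ Q ∧ y (Fin.last d) = (u : ℤ)} : ℤ)
          * PowerSeries.X ^ u)
        = (Nat.card {y : Fin (d + 1) → ℤ //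
            (fun j => (y j : ℝ)) ∈ Q ∧ y (Fin.last d) = (s : ℤ)} : ℤ) := by
      intro s
      rw [map_sum]
      simp_rw [PowerSeries.coeff_C_mul, PowerSeries.coeff_X_pow, mul_ite, mul_one, mul_zero]
      rw [Finset.sum_ite_eq (Finset.range (d + 1))]
      by_cases hs : s ∈ Finset.range (d + 1)
      · rw [if_pos hs]
      · rw [if_neg hs]
        haveI := EhrhartAux.slice_empty hw hQ s (by
          simp only [Finset.mem_range] at hs; omega)
        rw [Nat.card_of_isEmpty]
        simp
    calc (if t = 0 then (1 : ℤ) else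
          (Nat.card {x : Fin d → ℤ // (fun j => (x j : ℝ)) ∈ (t : ℝ) • Δ} : ℤ))
        = (Nat.card {y : Fin (d + 1) → ℤ // ∃ lam : Fin (d + 1) → ℝ, (∀ i, 0 ≤ lam i) ∧
            ((fun j => ((y j : ℤ) : ℝ)) = ∑ i, lam i • w i) ∧ ∑ i, lam i = (t : ℝ)} : ℤ) := by
          by_cases ht : t = 0
          · subst ht
            rw [if_pos rfl, EhrhartAux.card_cone_zero hw]
            simp
          · rw [if_neg ht, hΔ]
            exact_mod_cast EhrhartAux.card_cone_pos hw t ht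
      _ = ∑ p ∈ Finset.HasAntidiagonal.antidiagonal t,
            (Nat.card {y : Fin (d + 1) → ℤ //
                (fun j => (y j : ℝ)) ∈ Q ∧ y (Fin.last d) = (p.1 : ℤ)} : ℤ)
              * (Nat.card {m : Fin (d + 1) → ℕ // ∑ i, m i = p.2} : ℤ) := by
          exact_mod_cast congrArg Nat.cast (EhrhartAux.master hw hv hQ t)
      _ = _ := by
          refine Finset.sum_congr rfl fun p _ => ?_
          rw [hH p.1, PowerSeries.coeff_mk]
  rw [hAH, mul_assoc, EhrhartAux.compSeries (d + 1), mul_one]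
end
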